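/- A KKT point (x, μᵍ) of the trust-region subproblem (T) is a global minimizer of (T) if and only if μᵍ is the rightmost eigenvalue of M, i.e., the eigenvalue of M with maximal real part (which is necessarily real). Furthermore, in that case μᵍ ∈ [−λ₁, ∞). -/

import Mathlib

open Matrix Complex
open scoped Classical

noncomputable section

/-- Euclidean norm of a vector in `ℝⁿ`. -/
def euclNorm {n : ℕ} (x : Fin n → ℝ) : ℝ := Real.sqrt (x ⬝ᵥ x)

/-- The quadratic objective `f(x) = ½ xᵀPx + qᵀx`. -/
def qobj {n : ℕ} (P : Matrix (Fin n) (Fin n) ℝ) (q : Fin n → ℝ) (x : Fin n → ℝ) : ℝ :=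
  (1 / 2) * (x ⬝ᵥ P.mulVec x) + q ⬝ᵥ x

/-- The block matrix `M = [[-P, qqᵀ/r²], [I, -P]]`. -/
def trsM {n : ℕ} (P : Matrix (Fin n) (Fin n) ℝ) (q : Fin n → ℝ) (r : ℝ) :
    Matrix (Fin n ⊕ Fin n) (Fin n ⊕ Fin n) ℝ :=
  Matrix.fromBlocks (-P) ((r ^ 2)⁻¹ • Matrix.vecMulVec q q) 1 (-P)

/-- The complexification of `M`. -/
def trsMC {n : ℕ} (P : Matrix (Fin n) (Fin n) ℝ) (q : Fin n → ℝ) (r : ℝ) :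
    Matrix (Fin n ⊕ Fin n) (Fin n ⊕ Fin n) ℂ :=
  (trsM P q r).map Complex.ofReal

/-- `μ ∈ ℂ` is an eigenvalue of the complex matrix `A`. -/
def IsEig {m : Type*} [Fintype m] (A : Matrix m m ℂ) (μ : ℂ) : Prop :=
  ∃ v : m → ℂ, v ≠ 0 ∧ A.mulVec v = μ • v

/-- The secular function `s(z) = Σᵢ (wᵢᵀq)²/(λᵢ + z)² - r²` on `ℂ`. -/
def secular {n : ℕ} (lam : Fin n → ℝ) (w : Fin n → Fin n → ℝ) (q : Fin n → ℝ) (r : ℝ)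
    (z : ℂ) : ℂ :=
  (∑ i, ((w i ⬝ᵥ q : ℝ) : ℂ) ^ 2 / (((lam i : ℝ) : ℂ) + z) ^ 2) - (r : ℂ) ^ 2

/-- The secular function on `ℝ`. -/
def secularR {n : ℕ} (lam : Fin n → ℝ) (w : Fin n → Fin n → ℝ) (q : Fin n → ℝ) (r : ℝ)
    (t : ℝ) : ℝ :=
  (∑ i, (w i ⬝ᵥ q) ^ 2 / (lam i + t) ^ 2) - r ^ 2

/-- The derivative of the secular function, `s'(t) = -2 Σᵢ (wᵢᵀq)²/(λᵢ + t)³`. -/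
def secularDeriv {n : ℕ} (lam : Fin n → ℝ) (w : Fin n → Fin n → ℝ) (q : Fin n → ℝ)
    (t : ℝ) : ℝ :=
  -2 * ∑ i, (w i ⬝ᵥ q) ^ 2 / (lam i + t) ^ 3

/-- `z` is not a pole of the secular function (the poles are the `-λᵢ` with `wᵢᵀq ≠ 0`). -/
def IsNonpole {n : ℕ} (lam : Fin n → ℝ) (w : Fin n → Fin n → ℝ) (q : Fin n → ℝ) (z : ℂ) : Prop :=
  ∀ i, w i ⬝ᵥ q ≠ 0 → z ≠ -((lam i : ℝ) : ℂ)

/-- `f` has a zero of order exactly `k` at `z`. -/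
def HasZeroOfOrder (f : ℂ → ℂ) (z : ℂ) (k : ℕ) : Prop :=
  ∃ g : ℂ → ℂ, AnalyticAt ℂ g z ∧ g z ≠ 0 ∧ ∀ᶠ u in nhds z, f u = (u - z) ^ k * g u

end


open Matrix Complex

namespace TRS1

variable {n : ℕ}

section Field
variable {K : Type*} [Field K]

lemma orth_mul (u : Fin n → Fin n → K) (hu : ∀ i j, u i ⬝ᵥ u j = if i = j then 1 else 0) :
    (Matrix.of u)ᵀ * (Matrix.of u) = 1 := by
  rw [← mul_eq_one_comm]
  ext i j
  simpa [Matrix.mul_apply, dotProduct, Matrix.one_apply] using hu i j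

lemma expand (u : Fin n → Fin n → K) (hu : ∀ i j, u i ⬝ᵥ u j = if i = j then 1 else 0)
    (v : Fin n → K) : v = ∑ i, (u i ⬝ᵥ v) • u i := by
  have h := orth_mul u hu
  have h2 : ((Matrix.of u)ᵀ * Matrix.of u) *ᵥ v = v := by rw [h, Matrix.one_mulVec]
  rw [← Matrix.mulVec_mulVec] at h2
  conv_lhs => rw [← h2]
  ext j
  simp only [Matrix.mulVec, dotProduct, Matrix.transpose_apply, Matrix.of_apply,
    Finset.sum_apply, Pi.smul_apply, smul_eq_mul]
  exact Finset.sum_congr rfl fun i _ => by ring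

lemma coords_inj (u : Fin n → Fin n → K) (hu : ∀ i j, u i ⬝ᵥ u j = if i = j then 1 else 0)
    {v v' : Fin n → K} (h : ∀ i, u i ⬝ᵥ v = u i ⬝ᵥ v') : v = v' := by
  rw [expand u hu v, expand u hu v']
  exact Finset.sum_congr rfl fun i _ => by rw [h i]

lemma parseval (u : Fin n → Fin n → K) (hu : ∀ i j, u i ⬝ᵥ u j = if i = j then 1 else 0)
    (v v' : Fin n → K) : v ⬝ᵥ v' = ∑ i, (u i ⬝ᵥ v) * (u i ⬝ᵥ v') := by
  have h2 : ((Matrix.of u)ᵀ * Matrix.of u) *ᵥ v' = v' := by rw [orth_mul u hu, Matrix.one_mulVec]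
  conv_lhs => rw [← h2]
  rw [← Matrix.mulVec_mulVec, Matrix.dotProduct_mulVec, Matrix.vecMul_transpose]
  rfl

lemma sym_coord {P : Matrix (Fin n) (Fin n) K} (hP : P.IsSymm) {u : Fin n → K} {lam : K}
    (h : P *ᵥ u = lam • u) (v : Fin n → K) : u ⬝ᵥ (P *ᵥ v) = lam * (u ⬝ᵥ v) := by
  rw [Matrix.dotProduct_mulVec, ← Matrix.mulVec_transpose, hP.eq, h,
    smul_dotProduct, smul_eq_mul]

lemma vecMulVec_mulVec (u v z : Fin n → K) :
    (Matrix.vecMulVec u v) *ᵥ z = (v ⬝ᵥ z) • u := by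
  ext i
  simp only [Matrix.mulVec, dotProduct, Matrix.vecMulVec_apply, Pi.smul_apply,
    smul_eq_mul, Finset.sum_mul]
  exact Finset.sum_congr rfl fun j _ => by ring

end Field

/-- complexification of a real vector -/
def cv {m : Type*} (v : m → ℝ) : m → ℂ := fun i => (v i : ℂ)

lemma cv_dot {m : Type*} [Fintype m] (v w : m → ℝ) : cv v ⬝ᵥ cv w = ((v ⬝ᵥ w : ℝ) : ℂ) := by
  simp [cv, dotProduct]

lemma cv_eq_zero {m : Type*} (v : m → ℝ) : cv v = 0 ↔ v = 0 := by
  constructor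
  · intro h; ext i; have := congrFun h i; simpa [cv] using this
  · rintro rfl; ext i; simp [cv]

lemma map_mulVec_cv {m : Type*} [Fintype m] (A : Matrix m m ℝ) (v : m → ℝ) :
    (A.map Complex.ofReal) *ᵥ cv v = cv (A *ᵥ v) := by
  ext i
  simp only [Matrix.mulVec, dotProduct, Matrix.map_apply, cv]
  push_cast
  rfl

end TRS1
namespace TRS1

variable {n : ℕ}

lemma dot_sum {K : Type*} [Field K] (v : Fin n → K) (c : Fin n → K) (u : Fin n → Fin n → K) :
    v ⬝ᵥ (∑ i, c i • u i) = ∑ i, c i * (v ⬝ᵥ u i) := by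
  simp only [dotProduct, Finset.sum_apply, Pi.smul_apply, smul_eq_mul, Finset.mul_sum]
  rw [Finset.sum_comm]
  exact Finset.sum_congr rfl fun i _ => Finset.sum_congr rfl fun j _ => by ring

lemma coord_sum {K : Type*} [Field K] (u : Fin n → Fin n → K)
    (hu : ∀ i j, u i ⬝ᵥ u j = if i = j then 1 else 0) (c : Fin n → K) (i : Fin n) :
    u i ⬝ᵥ (∑ k, c k • u k) = c i := by
  rw [dot_sum]
  simp only [hu]
  simp [Finset.sum_ite_eq]

lemma smul_elim {α β : Type*} (t : ℝ) (y : α → ℝ) (z : β → ℝ) :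
    t • Sum.elim y z = Sum.elim (t • y) (t • z) := by
  ext i; cases i <;> simp

lemma elim_ne_zero_of_inr {α β : Type*} {y : α → ℝ} {z : β → ℝ} (hz : z ≠ 0) :
    Sum.elim y z ≠ 0 := by
  intro h
  exact hz (funext fun i => congrFun h (Sum.inr i))

lemma eig_real_to_complex {m : Type*} [Fintype m] (A : Matrix m m ℝ) (v : m → ℝ) (μ : ℝ)
    (hv : v ≠ 0) (h : A *ᵥ v = μ • v) : IsEig (A.map Complex.ofReal) (μ : ℂ) := by
  refine ⟨cv v, by simpa [cv_eq_zero] using hv, ?_⟩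
  rw [map_mulVec_cv, h]
  ext i; simp [cv]

lemma trsM_mulVec (P : Matrix (Fin n) (Fin n) ℝ) (q : Fin n → ℝ) (r : ℝ) (y z : Fin n → ℝ) :
    trsM P q r *ᵥ Sum.elim y z
      = Sum.elim (-(P *ᵥ y) + ((r ^ 2)⁻¹ * (q ⬝ᵥ z)) • q) (y - P *ᵥ z) := by
  rw [trsM, Matrix.fromBlocks_mulVec]
  simp only [Sum.elim_comp_inl, Sum.elim_comp_inr, Matrix.neg_mulVec, Matrix.one_mulVec,
    Matrix.smul_mulVec, vecMulVec_mulVec, smul_smul, sub_eq_add_neg]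

lemma eig_degenerate (P : Matrix (Fin n) (Fin n) ℝ) (q : Fin n → ℝ) (r : ℝ)
    (lam : Fin n → ℝ) (w : Fin n → Fin n → ℝ)
    (heig : ∀ i, P *ᵥ w i = lam i • w i)
    (horth : ∀ i j, w i ⬝ᵥ w j = if i = j then 1 else 0)
    (i : Fin n) (hai : w i ⬝ᵥ q = 0) :
    IsEig (trsMC P q r) ((-lam i : ℝ) : ℂ) := by
  have hw : w i ≠ 0 := by
    intro h
    have h1 := horth i i
    rw [h] at h1
    simp at h1
  have h1 : -(P *ᵥ (0 : Fin n → ℝ)) + ((r ^ 2)⁻¹ * (q ⬝ᵥ w i)) • q = (-lam i) • (0 : Fin n → ℝ) := by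
    rw [dotProduct_comm, hai]
    simp
  have h2 : (0 : Fin n → ℝ) - P *ᵥ w i = (-lam i) • w i := by
    rw [heig i]
    ext k; simp
  have hM : trsM P q r *ᵥ Sum.elim (0 : Fin n → ℝ) (w i) = (-lam i) • Sum.elim (0 : Fin n → ℝ) (w i) := by
    rw [trsM_mulVec, smul_elim, h1, h2]
  exact eig_real_to_complex _ _ _ (elim_ne_zero_of_inr hw) hM

lemma eig_from_root (P : Matrix (Fin n) (Fin n) ℝ) (hP : P.IsSymm) (q : Fin n → ℝ) (r : ℝ)
    (lam : Fin n → ℝ) (w : Fin n → Fin n → ℝ)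
    (heig : ∀ i, P *ᵥ w i = lam i • w i)
    (horth : ∀ i j, w i ⬝ᵥ w j = if i = j then 1 else 0)
    (hr : 0 < r) (t : ℝ) (hpos : ∀ i, lam i + t ≠ 0)
    (hsum : ∑ i, (w i ⬝ᵥ q) ^ 2 / (lam i + t) ^ 2 = r ^ 2)
    (j : Fin n) (haj : w j ⬝ᵥ q ≠ 0) :
    IsEig (trsMC P q r) ((t : ℝ) : ℂ) := by
  set a : Fin n → ℝ := fun i => w i ⬝ᵥ q with ha
  set z : Fin n → ℝ := ∑ i, (a i / (lam i + t) ^ 2) • w i with hz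
  set y : Fin n → ℝ := P *ᵥ z + t • z with hy
  have hzc : ∀ i, w i ⬝ᵥ z = a i / (lam i + t) ^ 2 := fun i => coord_sum w horth _ i
  have hyc : ∀ i, w i ⬝ᵥ y = a i / (lam i + t) := by
    intro i
    rw [hy, dotProduct_add, sym_coord hP (heig i), dotProduct_smul, hzc i,
      smul_eq_mul]
    field_simp [hpos i]
  have hqz : q ⬝ᵥ z = r ^ 2 := by
    rw [parseval w horth q z, ← hsum]
    refine Finset.sum_congr rfl fun i _ => ?_
    rw [hzc i]
    simp only [ha]
    ring
  have hzne : z ≠ 0 := by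
    intro h
    apply haj
    have hh := hzc j
    rw [h, dotProduct_zero] at hh
    rcases div_eq_zero_iff.mp hh.symm with h3 | h3
    · exact h3
    · exact absurd h3 (pow_ne_zero 2 (hpos j))
  have h1 : -(P *ᵥ y) + ((r ^ 2)⁻¹ * (q ⬝ᵥ z)) • q = t • y := by
    rw [hqz, inv_mul_cancel₀ (by positivity), one_smul]
    have hPy : P *ᵥ y + t • y = q := by
      apply coords_inj w horth
      intro i
      rw [dotProduct_add, sym_coord hP (heig i), dotProduct_smul, hyc i,
        smul_eq_mul]
      simp only [ha]
      field_simp [hpos i]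
    rw [← hPy]
    ext k; simp
  have h2 : y - P *ᵥ z = t • z := by
    rw [hy]; ext k; simp
  have hM : trsM P q r *ᵥ Sum.elim y z = t • Sum.elim y z := by
    rw [trsM_mulVec, smul_elim, h1, h2]
  exact eig_real_to_complex _ _ _ (elim_ne_zero_of_inr hzne) hM

end TRS1
namespace TRS1

variable {n : ℕ}

lemma sym_pair (P : Matrix (Fin n) (Fin n) ℝ) (hP : P.IsSymm) (u v : Fin n → ℝ) :
    u ⬝ᵥ (P *ᵥ v) = v ⬝ᵥ (P *ᵥ u) := by
  rw [Matrix.dotProduct_mulVec, ← Matrix.mulVec_transpose, hP.eq, dotProduct_comm]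

lemma norm_sq (x : Fin n → ℝ) (r : ℝ) (hr : 0 ≤ r) (h : euclNorm x = r) :
    x ⬝ᵥ x = r ^ 2 := by
  have h0 : 0 ≤ x ⬝ᵥ x := Finset.sum_nonneg fun i _ => mul_self_nonneg _
  rw [← h]
  unfold euclNorm
  rw [Real.sq_sqrt h0]

lemma norm_of_sq (x : Fin n → ℝ) (r : ℝ) (hr : 0 ≤ r)
    (h : x ⬝ᵥ x = r ^ 2) : euclNorm x = r := by
  unfold euclNorm
  rw [h, Real.sqrt_sq hr]

lemma key_identity (P : Matrix (Fin n) (Fin n) ℝ) (hP : P.IsSymm) (q x : Fin n → ℝ) (μ r : ℝ)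
    (hq : P *ᵥ x + q + μ • x = 0) (hx2 : x ⬝ᵥ x = r ^ 2)
    (y : Fin n → ℝ) (hy2 : y ⬝ᵥ y = r ^ 2) :
    qobj P q y - qobj P q x
      = (1 / 2) * ((y - x) ⬝ᵥ (P *ᵥ (y - x)) + μ * ((y - x) ⬝ᵥ (y - x))) := by
  have hqe : q = -(P *ᵥ x) - μ • x := by
    have h : q + (P *ᵥ x + μ • x) = 0 := by rw [← hq]; abel
    have h2 := eq_neg_of_add_eq_zero_left h
    rw [h2]; abel
  rw [hqe]
  simp only [qobj, Matrix.mulVec_sub, dotProduct_sub, sub_dotProduct,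
    dotProduct_add, add_dotProduct, neg_dotProduct, dotProduct_neg,
    smul_dotProduct, dotProduct_smul, smul_eq_mul]
  rw [dotProduct_comm (P *ᵥ x) y, dotProduct_comm (P *ᵥ x) x,
    sym_pair P hP y x, dotProduct_comm y x, hx2, hy2]
  ring

lemma kkt_coords (P : Matrix (Fin n) (Fin n) ℝ) (hP : P.IsSymm) (q x : Fin n → ℝ) (μ : ℝ)
    (lam : Fin n → ℝ) (w : Fin n → Fin n → ℝ) (heig : ∀ i, P *ᵥ w i = lam i • w i)
    (hKKT : P *ᵥ x + q + μ • x = 0) (i : Fin n) :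
    (lam i + μ) * (w i ⬝ᵥ x) + (w i ⬝ᵥ q) = 0 := by
  have h := congrArg (fun v => w i ⬝ᵥ v) hKKT
  simp only [dotProduct_add, dotProduct_smul, dotProduct_zero,
    smul_eq_mul] at h
  rw [sym_coord hP (heig i)] at h
  linarith

lemma psd_quad (P : Matrix (Fin n) (Fin n) ℝ) (hP : P.IsSymm)
    (lam : Fin n → ℝ) (w : Fin n → Fin n → ℝ) (hmono : Monotone lam)
    (heig : ∀ i, P *ᵥ w i = lam i • w i)
    (horth : ∀ i j, w i ⬝ᵥ w j = if i = j then 1 else 0)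
    (hn : 0 < n) (μ : ℝ) (hμ : -lam ⟨0, hn⟩ ≤ μ) (v : Fin n → ℝ) :
    0 ≤ v ⬝ᵥ (P *ᵥ v) + μ * (v ⬝ᵥ v) := by
  have h1 : v ⬝ᵥ (P *ᵥ v) = ∑ i, lam i * (w i ⬝ᵥ v) ^ 2 := by
    rw [parseval w horth v (P *ᵥ v)]
    refine Finset.sum_congr rfl fun i _ => ?_
    rw [sym_coord hP (heig i)]
    ring
  have h2 : v ⬝ᵥ v = ∑ i, (w i ⬝ᵥ v) ^ 2 := by
    rw [parseval w horth v v]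
    exact Finset.sum_congr rfl fun i _ => (sq _).symm
  rw [h1, h2, Finset.mul_sum, ← Finset.sum_add_distrib]
  refine Finset.sum_nonneg fun i _ => ?_
  have hl : lam ⟨0, hn⟩ ≤ lam i := hmono (by simp [Fin.le_def])
  nlinarith [sq_nonneg (w i ⬝ᵥ v)]

set_option maxHeartbeats 1000000 in
lemma gm_imp_lb (P : Matrix (Fin n) (Fin n) ℝ) (hP : P.IsSymm) (q : Fin n → ℝ) (r : ℝ)
    (hr : 0 < r) (lam : Fin n → ℝ) (w : Fin n → Fin n → ℝ)
    (heig : ∀ i, P *ᵥ w i = lam i • w i)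
    (horth : ∀ i j, w i ⬝ᵥ w j = if i = j then 1 else 0)
    (hn : 0 < n) (x : Fin n → ℝ) (μg : ℝ)
    (hKKT : P *ᵥ x + q + μg • x = 0) (hx2 : x ⬝ᵥ x = r ^ 2)
    (hgm : ∀ y : Fin n → ℝ, euclNorm y = r → qobj P q x ≤ qobj P q y) :
    -lam ⟨0, hn⟩ ≤ μg := by
  by_contra hlt
  push_neg at hlt
  have hB : lam ⟨0, hn⟩ + μg < 0 := by linarith
  set i0 : Fin n := ⟨0, hn⟩ with hi0
  have hww : w i0 ⬝ᵥ w i0 = 1 := by rw [horth]; simp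
  have key : ∀ y : Fin n → ℝ, y ⬝ᵥ y = r ^ 2 →
      (y - x) ⬝ᵥ (P *ᵥ (y - x)) + μg * ((y - x) ⬝ᵥ (y - x)) < 0 → False := by
    intro y hy2 hneg
    have hid := key_identity P hP q x μg r hKKT hx2 y hy2
    have hgm' := hgm y (norm_of_sq y r hr.le hy2)
    nlinarith
  have hwPw : w i0 ⬝ᵥ (P *ᵥ w i0) = lam i0 := by
    rw [heig i0, dotProduct_smul, smul_eq_mul, hww, mul_one]
  by_cases hc : w i0 ⬝ᵥ x = 0
  · -- hard direction: x ⟂ w i0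
    have ha0 : x ⬝ᵥ w i0 = 0 := by rw [dotProduct_comm]; exact hc
    set X : ℝ := x ⬝ᵥ (P *ᵥ x) with hX
    obtain ⟨ε, hε0, hε1, hεA⟩ : ∃ ε : ℝ, 0 < ε ∧ ε ≤ 1 ∧
        ε * (|X + μg * r ^ 2| + 1) ≤ r ^ 2 * (-(lam i0 + μg)) := by
      refine ⟨min 1 (r ^ 2 * (-(lam i0 + μg)) / (|X + μg * r ^ 2| + 1)), ?_, min_le_left _ _, ?_⟩
      · apply lt_min one_pos
        apply div_pos
        · exact mul_pos (pow_pos hr 2) (by linarith)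
        · positivity
      · have h := min_le_right 1 (r ^ 2 * (-(lam i0 + μg)) / (|X + μg * r ^ 2| + 1))
        have hpos : (0:ℝ) < |X + μg * r ^ 2| + 1 := by positivity
        calc min 1 (r ^ 2 * (-(lam i0 + μg)) / (|X + μg * r ^ 2| + 1)) * (|X + μg * r ^ 2| + 1)
            ≤ (r ^ 2 * (-(lam i0 + μg)) / (|X + μg * r ^ 2| + 1)) * (|X + μg * r ^ 2| + 1) :=
              mul_le_mul_of_nonneg_right h hpos.le
          _ = r ^ 2 * (-(lam i0 + μg)) := by field_simp
    obtain ⟨s, hssq⟩ : ∃ s : ℝ, s ^ 2 = ε * (2 - ε) :=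
      ⟨Real.sqrt (ε * (2 - ε)), Real.sq_sqrt (by nlinarith)⟩
    set y : Fin n → ℝ := (1 - ε) • x + (r * s) • w i0 with hy
    have hy2 : y ⬝ᵥ y = r ^ 2 := by
      rw [hy]
      simp only [dotProduct_add, add_dotProduct, dotProduct_smul,
        smul_dotProduct, smul_eq_mul]
      rw [hww, hx2, ha0, hc]
      ring_nf
      rw [hssq]
      ring
    apply key y hy2
    have hyx : y - x = (-ε) • x + (r * s) • w i0 := by
      rw [hy]; ext k; simp; ring
    have hPw : x ⬝ᵥ (P *ᵥ w i0) = 0 := by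
      rw [heig i0, dotProduct_smul, smul_eq_mul, ha0, mul_zero]
    have hwPx : w i0 ⬝ᵥ (P *ᵥ x) = 0 := by rw [sym_pair P hP]; exact hPw
    have hfin : ε ^ 2 * (X + μg * r ^ 2) + r ^ 2 * (ε * (2 - ε)) * (lam i0 + μg) < 0 := by
      have c1 : ε ^ 2 * (X + μg * r ^ 2) ≤ ε ^ 2 * |X + μg * r ^ 2| :=
        mul_le_mul_of_nonneg_left (le_abs_self _) (sq_nonneg ε)
      have c2 : r ^ 2 * (ε * (2 - ε)) * (lam i0 + μg) ≤ ε * (r ^ 2 * (lam i0 + μg)) := by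
        have h0 : 0 ≤ r ^ 2 * ε * (1 - ε) :=
          mul_nonneg (mul_nonneg (pow_pos hr 2).le hε0.le) (by linarith)
        nlinarith [h0, hB]
      have c3 : ε * (ε * |X + μg * r ^ 2| + r ^ 2 * (lam i0 + μg)) < 0 := by
        apply mul_neg_of_pos_of_neg hε0
        have h1 : ε * |X + μg * r ^ 2| ≤ r ^ 2 * (-(lam i0 + μg)) - ε := by nlinarith
        have h2 : ε ^ 2 * |X + μg * r ^ 2| ≤ ε * |X + μg * r ^ 2| := by
          nlinarith [mul_nonneg (mul_nonneg hε0.le (sub_nonneg.mpr hε1))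
            (abs_nonneg (X + μg * r ^ 2))]
        linarith
      nlinarith [c1, c2, c3, hε0, hε1, abs_nonneg (X + μg * r ^ 2)]
    rw [hyx]
    simp only [dotProduct_add, add_dotProduct, dotProduct_smul,
      smul_dotProduct, smul_eq_mul, Matrix.mulVec_add, Matrix.mulVec_smul,
      dotProduct_neg, neg_dotProduct, Matrix.mulVec_neg]
    rw [hww, hx2, ha0, hc, hPw, hwPx, hwPw]
    have m1 : r ^ 2 * s ^ 2 * lam i0 = r ^ 2 * (ε * (2 - ε)) * lam i0 := by rw [hssq]
    have m2 : r ^ 2 * s ^ 2 * μg = r ^ 2 * (ε * (2 - ε)) * μg := by rw [hssq]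
    nlinarith [hfin, m1, m2, hX]
  · -- easy direction: reflect along w i0
    set y : Fin n → ℝ := x - (2 * (w i0 ⬝ᵥ x)) • w i0 with hy
    have hy2 : y ⬝ᵥ y = r ^ 2 := by
      rw [hy]
      simp only [dotProduct_sub, sub_dotProduct, dotProduct_smul,
        smul_dotProduct, smul_eq_mul]
      rw [hww, hx2, dotProduct_comm x (w i0)]
      ring
    apply key y hy2
    have hyx : y - x = (-(2 * (w i0 ⬝ᵥ x))) • w i0 := by rw [hy]; ext k; simp
    rw [hyx]
    simp only [dotProduct_smul, smul_dotProduct, smul_eq_mul, Matrix.mulVec_smul]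
    rw [hwPw, hww]
    have hc2 : 0 < (w i0 ⬝ᵥ x) ^ 2 := by positivity
    nlinarith [mul_neg_of_pos_of_neg hc2 hB]

end TRS1
namespace TRS1

variable {n : ℕ}

lemma trsMC_eq (P : Matrix (Fin n) (Fin n) ℝ) (q : Fin n → ℝ) (r : ℝ) :
    trsMC P q r = Matrix.fromBlocks (-(P.map Complex.ofReal))
      (((r : ℂ) ^ 2)⁻¹ • Matrix.vecMulVec (cv q) (cv q)) 1 (-(P.map Complex.ofReal)) := by
  unfold trsMC trsM
  rw [Matrix.fromBlocks_map]
  ext i j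
  rcases i with i | i <;> rcases j with j | j <;>
    simp [Matrix.fromBlocks, Matrix.map_apply, Matrix.vecMulVec_apply, cv, Matrix.one_apply,
      Matrix.smul_apply, smul_eq_mul, apply_ite Complex.ofReal] <;> push_cast <;> ring

set_option maxHeartbeats 1000000 in
lemma rightmost (P : Matrix (Fin n) (Fin n) ℝ) (hP : P.IsSymm) (q : Fin n → ℝ) (r : ℝ)
    (hr : 0 < r) (lam : Fin n → ℝ) (w : Fin n → Fin n → ℝ) (hmono : Monotone lam)
    (heig : ∀ i, P *ᵥ w i = lam i • w i)
    (horth : ∀ i j, w i ⬝ᵥ w j = if i = j then 1 else 0)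
    (hn : 0 < n) (x : Fin n → ℝ) (μg : ℝ)
    (hKKT : P *ᵥ x + q + μg • x = 0) (hx2 : x ⬝ᵥ x = r ^ 2)
    (hμ : -lam ⟨0, hn⟩ ≤ μg) (μ : ℂ) (hEig : IsEig (trsMC P q r) μ) : μ.re ≤ μg := by
  by_contra hgt
  push_neg at hgt
  obtain ⟨v, hv, hMv⟩ := hEig
  set PC := P.map Complex.ofReal with hPC
  have hPs : ∀ i j, P j i = P i j := fun i j => congrFun (congrFun hP.eq i) j
  have hPCs : PC.IsSymm := by
    ext i j
    simp only [Matrix.transpose_apply, hPC, Matrix.map_apply, hPs i j]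
  set wC : Fin n → Fin n → ℂ := fun i => cv (w i) with hwC
  have horthC : ∀ i j, wC i ⬝ᵥ wC j = if i = j then 1 else 0 := by
    intro i j
    rw [hwC]
    rw [cv_dot, horth i j]
    split_ifs <;> simp
  have heigC : ∀ i, PC *ᵥ wC i = ((lam i : ℂ)) • wC i := by
    intro i
    rw [hPC, hwC, map_mulVec_cv, heig i]
    ext j
    simp [cv]
  set y := fun i => v (Sum.inl i) with hy
  set z := fun i => v (Sum.inr i) with hz
  have hveq : v = Sum.elim y z := by ext k; cases k <;> rfl
  rw [hveq, trsMC_eq, Matrix.fromBlocks_mulVec] at hMv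
  simp only [Sum.elim_comp_inl, Sum.elim_comp_inr, Matrix.neg_mulVec, Matrix.one_mulVec,
    Matrix.smul_mulVec, vecMulVec_mulVec, smul_smul] at hMv
  have htop : -(PC *ᵥ y) + (((r : ℂ) ^ 2)⁻¹ * (cv q ⬝ᵥ z)) • cv q = μ • y :=
    funext fun i => by simpa using congrFun hMv (Sum.inl i)
  have hbot : y + -(PC *ᵥ z) = μ • z :=
    funext fun i => by simpa using congrFun hMv (Sum.inr i)
  set β : ℂ := ((r : ℂ) ^ 2)⁻¹ * (cv q ⬝ᵥ z) with hβ
  set aC : Fin n → ℂ := fun i => ((w i ⬝ᵥ q : ℝ) : ℂ) with haC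
  have haCq : ∀ i, wC i ⬝ᵥ cv q = aC i := fun i => by rw [hwC, cv_dot]
  have hyc : ∀ i, wC i ⬝ᵥ y = ((lam i : ℂ) + μ) * (wC i ⬝ᵥ z) := by
    intro i
    have h := congrArg (fun u => wC i ⬝ᵥ u) hbot
    simp only [dotProduct_add, dotProduct_neg, dotProduct_smul,
      smul_eq_mul] at h
    rw [sym_coord hPCs (heigC i)] at h
    linear_combination h
  have hkey : ∀ i, ((lam i : ℂ) + μ) ^ 2 * (wC i ⬝ᵥ z) = β * aC i := by
    intro i
    have h := congrArg (fun u => wC i ⬝ᵥ u) htop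
    simp only [dotProduct_add, dotProduct_neg, dotProduct_smul,
      smul_eq_mul] at h
    rw [sym_coord hPCs (heigC i), hyc i, haCq i] at h
    linear_combination -h
  have hzne : z ≠ 0 := by
    intro h0
    apply hv
    have hy0 : y = 0 := by
      have hb := hbot
      rw [h0] at hb
      simpa using hb
    rw [hveq, hy0, h0]
    ext k
    cases k <;> simp
  have hlam0 : ∀ i, lam ⟨0, hn⟩ ≤ lam i := fun i => hmono (by simp [Fin.le_def])
  have hne : ∀ i, ((lam i : ℂ) + μ) ≠ 0 := by
    intro i h0
    have h1 : lam i + μ.re = 0 := by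
      have := congrArg Complex.re h0
      simpa using this
    have := hlam0 i
    linarith
  have hβne : β ≠ 0 := by
    intro h0
    apply hzne
    apply coords_inj wC horthC (v := z) (v' := 0)
    intro i
    have hk := hkey i
    rw [h0, zero_mul] at hk
    rw [dotProduct_zero]
    exact (mul_eq_zero.mp hk).resolve_left (pow_ne_zero 2 (hne i))
  have hqz : cv q ⬝ᵥ z = β * ∑ i, aC i ^ 2 / ((lam i : ℂ) + μ) ^ 2 := by
    rw [parseval wC horthC (cv q) z, Finset.mul_sum]
    refine Finset.sum_congr rfl fun i _ => ?_
    rw [haCq i]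
    have hd2 : wC i ⬝ᵥ z = β * aC i / ((lam i : ℂ) + μ) ^ 2 := by
      rw [eq_div_iff (pow_ne_zero 2 (hne i))]
      linear_combination hkey i
    rw [hd2]
    ring
  have hr2ne : ((r : ℂ) ^ 2) ≠ 0 := pow_ne_zero 2 (by exact_mod_cast hr.ne')
  have hSr : ∑ i, aC i ^ 2 / ((lam i : ℂ) + μ) ^ 2 = (r : ℂ) ^ 2 := by
    have hqzne : cv q ⬝ᵥ z ≠ 0 := by
      intro h0
      apply hβne
      rw [hβ, h0, mul_zero]
    have h2 : cv q ⬝ᵥ z * 1 = cv q ⬝ᵥ z * (((r : ℂ) ^ 2)⁻¹ * ∑ i, aC i ^ 2 / ((lam i : ℂ) + μ) ^ 2) := by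
      rw [mul_one]
      calc cv q ⬝ᵥ z = β * ∑ i, aC i ^ 2 / ((lam i : ℂ) + μ) ^ 2 := hqz
        _ = _ := by rw [hβ]; ring
    have h3 := mul_left_cancel₀ hqzne h2
    exact ((inv_mul_eq_one₀ hr2ne).mp h3.symm).symm
  -- now magnitudes
  have hcoords := kkt_coords P hP q x μg lam w heig hKKT
  have hsumc : ∑ i, (w i ⬝ᵥ x) ^ 2 = r ^ 2 := by
    rw [← hx2, parseval w horth x x]
    exact Finset.sum_congr rfl fun i _ => by ring
  have habs_ge : ∀ i, lam i + μ.re ≤ ‖((lam i : ℂ) + μ)‖ := by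
    intro i
    have h := Complex.re_le_norm ((lam i : ℂ) + μ)
    simpa using h
  have hF : ∀ i, ‖(aC i ^ 2 / ((lam i : ℂ) + μ) ^ 2)‖
      = (w i ⬝ᵥ q) ^ 2 / (‖((lam i : ℂ) + μ)‖) ^ 2 := by
    intro i
    rw [norm_div, norm_pow, norm_pow, haC]
    rw [Complex.norm_real, Real.norm_eq_abs, _root_.sq_abs]
  have hle : ∀ i, ‖(aC i ^ 2 / ((lam i : ℂ) + μ) ^ 2)‖ ≤ (w i ⬝ᵥ x) ^ 2 := by
    intro i
    rw [hF i]
    by_cases hai : w i ⬝ᵥ q = 0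
    · rw [hai]
      simp [sq_nonneg]
    · have hlg : 0 < lam i + μg := by
        rcases lt_or_eq_of_le (by linarith [hlam0 i] : (0:ℝ) ≤ lam i + μg) with h | h
        · exact h
        · exfalso; apply hai; have := hcoords i; rw [← h] at this; linarith
      have habs : lam i + μg < ‖((lam i : ℂ) + μ)‖ := by
        have := habs_ge i
        linarith
      have hci : (w i ⬝ᵥ x) ^ 2 = (w i ⬝ᵥ q) ^ 2 / (lam i + μg) ^ 2 := by
        have hco := hcoords i
        field_simp
        linear_combination ((lam i + μg) * (w i ⬝ᵥ x) - (w i ⬝ᵥ q)) * hco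
      rw [hci]
      apply div_le_div_of_nonneg_left (sq_nonneg _) (by positivity)
      · nlinarith
  have hex : ∃ j, w j ⬝ᵥ q ≠ 0 := by
    by_contra hall
    push_neg at hall
    apply hr2ne
    rw [← hSr]
    refine Finset.sum_eq_zero fun i _ => ?_
    simp [haC, hall i]
  obtain ⟨j, hj⟩ := hex
  have hstrict : ‖(aC j ^ 2 / ((lam j : ℂ) + μ) ^ 2)‖ < (w j ⬝ᵥ x) ^ 2 := by
    rw [hF j]
    have hlg : 0 < lam j + μg := by
      rcases lt_or_eq_of_le (by linarith [hlam0 j] : (0:ℝ) ≤ lam j + μg) with h | h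
      · exact h
      · exfalso; apply hj; have := hcoords j; rw [← h] at this; linarith
    have habs : lam j + μg < ‖((lam j : ℂ) + μ)‖ := by
      have := habs_ge j
      linarith
    have hci : (w j ⬝ᵥ x) ^ 2 = (w j ⬝ᵥ q) ^ 2 / (lam j + μg) ^ 2 := by
      have hco := hcoords j
      field_simp
      linear_combination ((lam j + μg) * (w j ⬝ᵥ x) - (w j ⬝ᵥ q)) * hco
    rw [hci]
    apply div_lt_div_of_pos_left (by positivity) (by positivity)
    nlinarith
  have hsumlt : ∑ i, ‖(aC i ^ 2 / ((lam i : ℂ) + μ) ^ 2)‖ < r ^ 2 := by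
    rw [← hsumc]
    exact Finset.sum_lt_sum (fun i _ => hle i) ⟨j, Finset.mem_univ j, hstrict⟩
  have habsS : ‖(∑ i, aC i ^ 2 / ((lam i : ℂ) + μ) ^ 2)‖ = r ^ 2 := by
    rw [hSr, norm_pow, Complex.norm_real, Real.norm_eq_abs, abs_of_pos hr]
  have hineq := norm_sum_le Finset.univ (fun i => aC i ^ 2 / ((lam i : ℂ) + μ) ^ 2)
  rw [habsS] at hineq
  linarith
end TRS1
namespace TRS1

variable {n : ℕ}

lemma exists_eig_ge (P : Matrix (Fin n) (Fin n) ℝ) (hP : P.IsSymm) (q : Fin n → ℝ) (r : ℝ)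
    (hr : 0 < r) (lam : Fin n → ℝ) (w : Fin n → Fin n → ℝ) (hmono : Monotone lam)
    (heig : ∀ i, P *ᵥ w i = lam i • w i)
    (horth : ∀ i j, w i ⬝ᵥ w j = if i = j then 1 else 0)
    (hn : 0 < n) :
    ∃ ν : ℝ, -lam ⟨0, hn⟩ ≤ ν ∧ IsEig (trsMC P q r) ((ν : ℝ) : ℂ) := by
  set i0 : Fin n := ⟨0, hn⟩ with hi0
  have hlam0 : ∀ i, lam i0 ≤ lam i := fun i => hmono (by rw [Fin.le_def]; exact Nat.zero_le _)
  by_cases ha0 : w i0 ⬝ᵥ q = 0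
  · exact ⟨-lam i0, le_refl _, eig_degenerate P q r lam w heig horth i0 ha0⟩
  · -- IVT on g t = ∑ aᵢ²/(λᵢ+t)²
    set g : ℝ → ℝ := fun t => ∑ i, (w i ⬝ᵥ q) ^ 2 / (lam i + t) ^ 2 with hg
    set δ : ℝ := |w i0 ⬝ᵥ q| / (2 * r) with hδdef
    have hδ : 0 < δ := div_pos (abs_pos.mpr ha0) (by linarith)
    set t0 : ℝ := -lam i0 + δ with ht0
    set A : ℝ := ∑ i, (w i ⬝ᵥ q) ^ 2 with hA
    have hA0 : 0 ≤ A := Finset.sum_nonneg fun i _ => sq_nonneg _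
    set Kc : ℝ := 1 + A / r ^ 2 with hKc
    have hKc1 : 1 ≤ Kc := by
      rw [hKc]
      have : 0 ≤ A / r ^ 2 := div_nonneg hA0 (by positivity)
      linarith
    set t1 : ℝ := max t0 (Kc - lam i0) with ht1
    have h01 : t0 ≤ t1 := le_max_left _ _
    have hden : ∀ i, ∀ t, t0 ≤ t → 0 < lam i + t := by
      intro i t ht
      have := hlam0 i
      rw [ht0] at ht
      linarith
    have hcont : ContinuousOn g (Set.Icc t0 t1) := by
      rw [hg]
      apply continuousOn_finset_sum
      intro i _
      apply ContinuousOn.div continuousOn_const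
      · exact ((continuous_const.add continuous_id).pow 2).continuousOn
      · intro t ht
        exact pow_ne_zero 2 (hden i t ht.1).ne'
    have hgt0 : r ^ 2 < g t0 := by
      have hterm : (w i0 ⬝ᵥ q) ^ 2 / (lam i0 + t0) ^ 2 = 4 * r ^ 2 := by
        rw [ht0]
        have : lam i0 + (-lam i0 + δ) = δ := by ring
        rw [this, hδdef]
        rw [div_pow, _root_.sq_abs]
        rw [div_div_eq_mul_div]
        have h2r : (2 * r) ^ 2 ≠ 0 := by positivity
        by_cases hq2 : (w i0 ⬝ᵥ q) ^ 2 = 0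
        · exact absurd (pow_eq_zero_iff (n := 2) (by norm_num) |>.mp hq2) ha0
        · field_simp
          ring
      have hsingle : (w i0 ⬝ᵥ q) ^ 2 / (lam i0 + t0) ^ 2 ≤ g t0 := by
        rw [hg]
        exact Finset.single_le_sum (f := fun i => (w i ⬝ᵥ q) ^ 2 / (lam i + t0) ^ 2)
          (fun i _ => by positivity) (Finset.mem_univ i0)
      nlinarith [sq_nonneg r]
    have hgt1 : g t1 < r ^ 2 := by
      have hbound : ∀ i, (w i ⬝ᵥ q) ^ 2 / (lam i + t1) ^ 2 ≤ (w i ⬝ᵥ q) ^ 2 / Kc ^ 2 := by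
        intro i
        apply div_le_div_of_nonneg_left (sq_nonneg _) (by positivity)
        have h1 : Kc ≤ lam i + t1 := by
          have h2 : Kc - lam i0 ≤ t1 := le_max_right _ _
          have := hlam0 i
          linarith
        nlinarith
      have hsum : g t1 ≤ A / Kc ^ 2 := by
        rw [hg, hA, Finset.sum_div]
        exact Finset.sum_le_sum fun i _ => hbound i
      have hAKc : A / Kc ^ 2 < r ^ 2 := by
        rw [div_lt_iff₀ (by positivity)]
        have h3 : A < Kc * r ^ 2 := by
          rw [hKc]
          have : (1 + A / r ^ 2) * r ^ 2 = r ^ 2 + A := by field_simp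
          rw [this]
          nlinarith
        nlinarith
      linarith
    have hmem : r ^ 2 ∈ Set.Icc (g t1) (g t0) := ⟨hgt1.le, hgt0.le⟩
    obtain ⟨t, ht, hgt⟩ := intermediate_value_Icc' h01 hcont hmem
    refine ⟨t, ?_, ?_⟩
    · have := ht.1
      rw [ht0] at this
      linarith
    · apply eig_from_root P hP q r lam w heig horth hr t
        (fun i => (hden i t ht.1).ne') hgt i0 ha0
end TRS1

/-- a KKT point `(x, μg)` of (T) is a global minimizer iff `μg` is the
rightmost eigenvalue of `M`; furthermore in that case `μg ∈ [-λ₁, ∞)`. -/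
theorem stmt_1 {n : ℕ} (hn : 1 < n)
    (P : Matrix (Fin n) (Fin n) ℝ) (hP : P.IsSymm)
    (lam : Fin n → ℝ) (w : Fin n → Fin n → ℝ)
    (hmono : Monotone lam)
    (heig : ∀ i, P.mulVec (w i) = lam i • w i)
    (horth : ∀ i j, w i ⬝ᵥ w j = if i = j then (1 : ℝ) else 0)
    (q : Fin n → ℝ) (r : ℝ) (hr : 0 < r)
    (x : Fin n → ℝ) (μg : ℝ)
    (hKKT : P.mulVec x + q + μg • x = 0)
    (hx : euclNorm x = r) :
    ((∀ y : Fin n → ℝ, euclNorm y = r → qobj P q x ≤ qobj P q y) ↔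
      (IsEig (trsMC P q r) (μg : ℂ) ∧
        ∀ μ : ℂ, IsEig (trsMC P q r) μ → μ.re ≤ μg))
    ∧ ((∀ y : Fin n → ℝ, euclNorm y = r → qobj P q x ≤ qobj P q y) →
        -(lam ⟨0, by omega⟩) ≤ μg) := by
  have hn0 : 0 < n := by omega
  have hx2 : x ⬝ᵥ x = r ^ 2 := TRS1.norm_sq x r hr.le hx
  have hpar : ∑ i, (w i ⬝ᵥ x) ^ 2 = r ^ 2 := by
    rw [← hx2, TRS1.parseval w horth x x]
    exact Finset.sum_congr rfl fun i _ => by ring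
  have hGMiff : (∀ y : Fin n → ℝ, euclNorm y = r → qobj P q x ≤ qobj P q y)
      ↔ (-lam ⟨0, hn0⟩ ≤ μg) := by
    constructor
    · exact TRS1.gm_imp_lb P hP q r hr lam w heig horth hn0 x μg hKKT hx2
    · intro hlb y hy
      have hy2 := TRS1.norm_sq y r hr.le hy
      have hid := TRS1.key_identity P hP q x μg r hKKT hx2 y hy2
      have hpsd := TRS1.psd_quad P hP lam w hmono heig horth hn0 μg hlb (y - x)
      linarith
  constructor
  · constructor
    · intro hgm
      have hlb := hGMiff.mp hgm
      constructor
      · -- μg is an eigenvalue of M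
        by_cases hdeg : ∃ i, lam i + μg = 0
        · obtain ⟨i, hi⟩ := hdeg
          have hai : w i ⬝ᵥ q = 0 := by
            have hc := TRS1.kkt_coords P hP q x μg lam w heig hKKT i
            rw [hi, zero_mul, zero_add] at hc
            exact hc
          have hE := TRS1.eig_degenerate P q r lam w heig horth i hai
          have hμi : μg = -lam i := by linarith
          rw [hμi]
          exact hE
        · push_neg at hdeg
          have hsum : ∑ i, (w i ⬝ᵥ q) ^ 2 / (lam i + μg) ^ 2 = r ^ 2 := by
            rw [← hpar]
            refine Finset.sum_congr rfl fun i _ => ?_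
            have hc := TRS1.kkt_coords P hP q x μg lam w heig hKKT i
            rw [div_eq_iff (pow_ne_zero 2 (hdeg i))]
            linear_combination (w i ⬝ᵥ q - (lam i + μg) * (w i ⬝ᵥ x)) * hc
          have hex : ∃ j, w j ⬝ᵥ q ≠ 0 := by
            by_contra hall
            push_neg at hall
            have hc0 : ∀ i, w i ⬝ᵥ x = 0 := by
              intro i
              have hc := TRS1.kkt_coords P hP q x μg lam w heig hKKT i
              rw [hall i, add_zero] at hc
              exact (mul_eq_zero.mp hc).resolve_left (hdeg i)
            have hz : r ^ 2 = 0 := by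
              rw [← hpar]
              exact Finset.sum_eq_zero fun i _ => by rw [hc0 i]; ring
            nlinarith
          obtain ⟨j, hj⟩ := hex
          exact TRS1.eig_from_root P hP q r lam w heig horth hr μg hdeg hsum j hj
      · intro μ hμE
        exact TRS1.rightmost P hP q r hr lam w hmono heig horth hn0 x μg hKKT hx2 hlb μ hμE
    · rintro ⟨hE, hRM⟩
      apply hGMiff.mpr
      obtain ⟨ν, hν, hνE⟩ := TRS1.exists_eig_ge P hP q r hr lam w hmono heig horth hn0
      have hre := hRM ν hνE
      simp only [Complex.ofReal_re] at hre
      linarith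
  · intro hgm
    exact hGMiff.mp hgm
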